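/- Assume the leaf-hash h : α → β is injective and the node combiner H : β → β → β is injective as a function on pairs. If some membership proof π verifies an element e at position i against the root mroot d ℓ, then e = ℓ i. (Soundness of Merkle membership proofs; this is the honest-challenger direction of Proposition 2: a dishonest prover cannot win the membership fraud-proof for a wrong element.) -/
import Mathlib


variable {α β : Type*}

/-- First half of a family of `2^(d+1)` leaves. -/
def half0 {d : ℕ} (ℓ : Fin (2 ^ (d + 1)) → α) : Fin (2 ^ d) → α :=
  fun i => ℓ ⟨i.val, by
    have hi := i.isLt
    have h2 : 2 ^ (d + 1) = 2 ^ d + 2 ^ d := by rw [pow_succ]; ring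
    omega⟩

/-- Second half of a family of `2^(d+1)` leaves. -/
def half1 {d : ℕ} (ℓ : Fin (2 ^ (d + 1)) → α) : Fin (2 ^ d) → α :=
  fun i => ℓ ⟨2 ^ d + i.val, by
    have hi := i.isLt
    have h2 : 2 ^ (d + 1) = 2 ^ d + 2 ^ d := by rw [pow_succ]; ring
    omega⟩

/-- Merkle root of a family of `2^d` leaves, with leaf hash `h` and node combiner `H`. -/
def mroot (h : α → β) (H : β → β → β) : (d : ℕ) → (Fin (2 ^ d) → α) → β
  | 0, ℓ => h (ℓ ⟨0, by positivity⟩)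
  | d + 1, ℓ => H (mroot h H d (half0 ℓ)) (mroot h H d (half1 ℓ))

/-- Verification fold of a membership proof `π` (a vector of `d` hashes) for element `e`
at position `i`: `v 0 = h e`, and `v (k+1) = H (π k) (v k)` if the `k`-th bit of `i` is 1,
else `v (k+1) = H (v k) (π k)`. -/
def vfold (h : α → β) (H : β → β → β) (e : α) (i : ℕ) {d : ℕ} (π : Fin d → β) : ℕ → β
  | 0 => h e
  | k + 1 =>
    if hk : k < d then
      if i.testBit k then H (π ⟨k, hk⟩) (vfold h H e i π k)
      else H (vfold h H e i π k) (π ⟨k, hk⟩)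
    else vfold h H e i π k

/-- The membership proof `π` verifies element `e` at position `i` against root `r`. -/
def Verifies (h : α → β) (H : β → β → β) {d : ℕ} (π : Fin d → β) (e : α)
    (i : Fin (2 ^ d)) (r : β) : Prop :=
  vfold h H e i.val π d = r


lemma vfold_congr (h : α → β) (H : β → β → β) (e : α) {d d' : ℕ}
    (π : Fin d → β) (π' : Fin d' → β) (i i' : ℕ) (k : ℕ)
    (hk : k ≤ d) (hk' : k ≤ d')
    (hπ : ∀ j (hj : j < k), π ⟨j, by omega⟩ = π' ⟨j, by omega⟩)
    (hbit : ∀ j < k, i.testBit j = i'.testBit j) :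
    vfold h H e i π k = vfold h H e i' π' k := by
  induction k with
  | zero => rfl
  | succ k ih =>
    have hrec := ih (by omega) (by omega) (fun j hj => hπ j (by omega))
      (fun j hj => hbit j (by omega))
    simp only [vfold, dif_pos (show k < d by omega), dif_pos (show k < d' by omega),
      hrec, hbit k (by omega), hπ k (by omega)]

lemma testBit_top {d i : ℕ} (hi : i < 2 ^ (d + 1)) :
    i.testBit d = decide (2 ^ d ≤ i) := by
  rw [Nat.testBit_eq_decide_div_mod_eq]
  rcases Nat.lt_or_ge i (2 ^ d) with hlt | hge
  · rw [Nat.div_eq_of_lt hlt]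
    simp [Nat.not_le.mpr hlt]
  · have h1 : 1 ≤ i / 2 ^ d := (Nat.le_div_iff_mul_le (by positivity)).mpr (by omega)
    have h2 : i / 2 ^ d < 2 := (Nat.div_lt_iff_lt_mul (by positivity)).mpr
      (by rw [pow_succ] at hi; omega)
    have : i / 2 ^ d = 1 := by omega
    simp [this, hge]

lemma sound_aux (h : α → β) (H : β → β → β)
    (hinj : Function.Injective h)
    (Hinj : Function.Injective fun p : β × β => H p.1 p.2) :
    ∀ (d : ℕ) (ℓ : Fin (2 ^ d) → α) (π : Fin d → β) (e : α) (i : Fin (2 ^ d)),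
      vfold h H e i.val π d = mroot h H d ℓ → e = ℓ i := by
  intro d
  induction d with
  | zero =>
    intro ℓ π e i hv
    have : e = ℓ ⟨0, by positivity⟩ := hinj hv
    rwa [show (⟨0, by positivity⟩ : Fin (2^0)) = i from Fin.ext (by omega)] at this
  | succ d ih =>
    intro ℓ π e i hv
    have hi := i.isLt
    have h2 : 2 ^ (d + 1) = 2 ^ d + 2 ^ d := by rw [pow_succ]; ring
    set i' : Fin (2 ^ d) := ⟨i.val % 2 ^ d, Nat.mod_lt _ (by positivity)⟩ with hi'
    set π' : Fin d → β := fun j => π ⟨j.val, by omega⟩ with hπ'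
    have hmod := Nat.mod_lt i.val (show 0 < 2 ^ d by positivity)
    have hbit : ∀ j < d, (i.val).testBit j = (i'.val).testBit j := by
      intro j hj
      simp [hi', Nat.testBit_mod_two_pow, hj]
    have hcongr : vfold h H e i.val π d = vfold h H e i'.val π' d :=
      vfold_congr h H e π π' _ _ d (by omega) le_rfl (fun j hj => rfl) hbit
    have htop := testBit_top hi
    simp only [vfold, dif_pos (show d < d + 1 by omega), mroot, htop] at hv
    rcases Nat.lt_or_ge i.val (2 ^ d) with hlt | hge
    · rw [if_neg (by simp [Nat.not_le.mpr hlt])] at hv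
      have hpair := Hinj (a₁ := (vfold h H e i.val π d, π ⟨d, by omega⟩))
        (a₂ := (mroot h H d (half0 ℓ), mroot h H d (half1 ℓ))) hv
      have hfst := congrArg Prod.fst hpair
      rw [hcongr] at hfst
      have := ih (half0 ℓ) π' e i' hfst
      rw [this]
      show half0 ℓ i' = ℓ i
      simp only [half0]
      congr 1
      ext
      simp [hi', Nat.mod_eq_of_lt hlt]
    · rw [if_pos (by simp [hge])] at hv
      have hpair := Hinj (a₁ := (π ⟨d, by omega⟩, vfold h H e i.val π d))
        (a₂ := (mroot h H d (half0 ℓ), mroot h H d (half1 ℓ))) hv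
      have hsnd := congrArg Prod.snd hpair
      rw [hcongr] at hsnd
      have := ih (half1 ℓ) π' e i' hsnd
      rw [this]
      show half1 ℓ i' = ℓ i
      simp only [half1]
      congr 1
      ext
      have heq : i.val % 2 ^ d = i.val - 2 ^ d := by
        rw [Nat.mod_eq_sub_mod hge, Nat.mod_eq_of_lt (by omega)]
      simp only [hi']
      omega

/-- Soundness of Merkle membership proofs (honest-challenger direction of Proposition 2):
if `h` and `H` are injective and some membership proof verifies `e` at position `i`
against `mroot d ℓ`, then `e = ℓ i`. -/
theorem membership_sound (h : α → β) (H : β → β → β)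
    (hinj : Function.Injective h)
    (Hinj : Function.Injective fun p : β × β => H p.1 p.2)
    {d : ℕ} (ℓ : Fin (2 ^ d) → α) (π : Fin d → β) (e : α) (i : Fin (2 ^ d))
    (hv : Verifies h H π e i (mroot h H d ℓ)) :
    e = ℓ i :=
  sound_aux h H hinj Hinj d ℓ π e i hv
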